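/- The only rational point on the elliptic curve y² = x³ + x² + x is (0,0): for all rational numbers x, y, if y² = x³ + x² + x then x = 0 and y = 0. -/

import Mathlib

private lemma coprime_of_no_common_prime (a b : ℤ)
    (h : ∀ p : ℤ, Prime p → p ∣ a → p ∣ b → False) : IsCoprime a b := by
  rw [Int.isCoprime_iff_gcd_eq_one]
  by_contra hg
  obtain ⟨p, hp, hpd⟩ := Nat.exists_prime_and_dvd hg
  have hpz : Prime (p : ℤ) := Int.prime_iff_natAbs_prime.mpr (by simpa using hp)
  exact h p hpz (dvd_trans (Int.natCast_dvd_natCast.mpr hpd) (Int.gcd_dvd_left _ _))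
    (dvd_trans (Int.natCast_dvd_natCast.mpr hpd) (Int.gcd_dvd_right _ _))

private lemma sq_of_coprime_pos {a b c : ℤ} (h : IsCoprime a b) (heq : a * b = c ^ 2)
    (ha : 0 < a) : ∃ r : ℤ, 0 ≤ r ∧ a = r ^ 2 := by
  obtain ⟨r, hr | hr⟩ := Int.sq_of_isCoprime h heq
  · exact ⟨|r|, abs_nonneg r, by rw [sq_abs]; exact hr⟩
  · exfalso; nlinarith [sq_nonneg r]

private lemma eq_of_sq_eq_sq' {a b : ℤ} (ha : 0 ≤ a) (hb : 0 ≤ b) (h : a ^ 2 = b ^ 2) :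
    a = b := by
  have h2 : (a - b) * (a + b) = 0 := by ring_nf; linarith
  rcases mul_eq_zero.mp h2 with h3 | h3
  · linarith
  · have : a = -b := by linarith
    omega

private lemma odd_coprime_two {p : ℤ} (h : Odd p) : IsCoprime p 2 := by
  obtain ⟨k, rfl⟩ := h
  exact ⟨1, -k, by ring⟩

private lemma odd_sq_zmod8 {a : ℤ} (h : Odd a) : ((a : ZMod 8)) ^ 2 = 1 := by
  obtain ⟨k, rfl⟩ := h
  obtain ⟨j, hj⟩ : Even (k * (k + 1)) := Int.even_mul_succ_self k
  have key : (2 * k + 1 : ℤ) ^ 2 = 8 * j + 1 := by nlinarith [hj]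
  calc ((2 * k + 1 : ℤ) : ZMod 8) ^ 2 = ((( 2 * k + 1 : ℤ) ^ 2 : ℤ) : ZMod 8) := by push_cast; ring
    _ = ((8 * j + 1 : ℤ) : ZMod 8) := by rw [key]
    _ = 1 := by push_cast; rw [show ((8 : ZMod 8)) = 0 from by decide]; ring

-- Core case of the quartic reduction: p odd, q even, everything positive.
private lemma isCoprime_abs {a b : ℤ} (h : IsCoprime a b) : IsCoprime |a| |b| := by
  rw [Int.isCoprime_iff_gcd_eq_one] at h ⊢
  simpa [Int.gcd, Int.natAbs_abs] using h

private lemma QredCore (p q s : ℤ) (hp : 0 < p) (hq : 0 < q) (hs : 0 < s)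
    (hpodd : Odd p) (hqeven : Even q) (hcop : IsCoprime p q)
    (h : p ^ 4 + p ^ 2 * q ^ 2 + q ^ 4 = s ^ 2)
    (oracle : ∀ X Y M N : ℤ, X ^ 2 + Y ^ 2 ≤ p ^ 2 + q ^ 2 → X ^ 2 + Y ^ 2 = M ^ 2 + N ^ 2 →
      X * Y = 2 * (M * N) → IsCoprime X Y → M = 0 ∨ N = 0) : False := by
  obtain ⟨q₁, hq1⟩ := hqeven
  have hq1pos : 0 < q₁ := by linarith
  have hp2odd : Odd (p ^ 2) := hpodd.pow
  have hq2even : Even (q ^ 2) := ⟨2 * q₁ ^ 2, by rw [hq1]; ring⟩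
  have hq4even : Even (q ^ 4) := ⟨8 * q₁ ^ 4, by rw [hq1]; ring⟩
  have hsq_odd : Odd (p ^ 2 + q ^ 2) := hp2odd.add_even hq2even
  -- s < p^2 + q^2
  have hs2 : s ^ 2 < (p ^ 2 + q ^ 2) ^ 2 := by nlinarith [mul_pos (mul_pos hp hp) (mul_pos hq hq)]
  have hslt : s < p ^ 2 + q ^ 2 := by nlinarith [hs2]
  -- parity of s
  have hsodd : Odd s := by
    rcases Int.even_or_odd s with he | ho
    · exfalso
      obtain ⟨t, ht⟩ := he
      have h2 : Odd (p ^ 4 + p ^ 2 * q ^ 2 + q ^ 4) := by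
        have hp4 : Odd (p ^ 4) := hpodd.pow
        have hpq : Even (p ^ 2 * q ^ 2) := hq2even.mul_left _
        exact (hp4.add_even hpq).add_even hq4even
      rw [h] at h2
      have h3 : Even (s ^ 2) := ⟨2 * t ^ 2, by rw [ht]; ring⟩
      exact (Int.not_odd_iff_even.mpr h3) h2
    · exact ho
  -- halves
  obtain ⟨P, hP⟩ : Even (p ^ 2 + q ^ 2 - s) := hsq_odd.sub_odd hsodd
  obtain ⟨Q, hQ⟩ : Even (p ^ 2 + q ^ 2 + s) := hsq_odd.add_odd hsodd
  have hPpos : 0 < P := by linarith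
  have hQpos : 0 < Q := by linarith
  have hPQsum : P + Q = p ^ 2 + q ^ 2 := by linarith
  have hPQprod : P * Q = (p * q₁) ^ 2 := by
    have h4 : 4 * (P * Q) = 4 * ((p * q₁) ^ 2) := by
      linear_combination (-(2 * Q)) * hP - (p ^ 2 + q ^ 2 - s) * hQ + h +
        (p ^ 2 * (q + 2 * q₁)) * hq1
    linarith
  have hcopPQ : IsCoprime P Q := by
    apply coprime_of_no_common_prime
    intro l hl h1 h2
    have hsum : l ∣ p ^ 2 + q ^ 2 := hPQsum ▸ dvd_add h1 h2
    have hprod : l ∣ (p * q₁) ^ 2 := hPQprod ▸ Dvd.dvd.mul_right h1 Q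
    have hlpq : l ∣ p * q₁ := hl.dvd_of_dvd_pow hprod
    have hlp : l ∣ p := by
      rcases (hl.dvd_mul.mp hlpq) with h3 | h3
      · exact h3
      · have hlq : l ∣ q := by rw [hq1]; exact dvd_add h3 h3
        have hq2 : l ∣ q ^ 2 := dvd_pow hlq two_ne_zero
        have hp2 : l ∣ p ^ 2 := by
          have := dvd_sub hsum hq2; simpa using this
        exact hl.dvd_of_dvd_pow hp2
    have hlq : l ∣ q := by
      have hp2 : l ∣ p ^ 2 := dvd_pow hlp two_ne_zero
      have hq2 : l ∣ q ^ 2 := by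
        have := dvd_sub hsum hp2; simpa using this
      exact hl.dvd_of_dvd_pow hq2
    exact hl.not_unit (hcop.isUnit_of_dvd' hlp hlq)
  -- each half is a square
  obtain ⟨d₁, hd₁0, hd₁⟩ := sq_of_coprime_pos hcopPQ hPQprod hPpos
  obtain ⟨d₂, hd₂0, hd₂⟩ := sq_of_coprime_pos hcopPQ.symm
    (by rw [mul_comm]; exact hPQprod) hQpos
  have hdd : d₁ * d₂ = p * q₁ := by
    apply eq_of_sq_eq_sq' (mul_nonneg hd₁0 hd₂0) (by positivity)
    calc (d₁ * d₂) ^ 2 = (d₁ ^ 2) * (d₂ ^ 2) := by ring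
      _ = P * Q := by rw [← hd₁, ← hd₂]
      _ = (p * q₁) ^ 2 := hPQprod
  -- apply the oracle
  have hcop2 : IsCoprime p (2 * q₁) :=
    IsCoprime.mul_right (odd_coprime_two hpodd)
      (IsCoprime.of_isCoprime_of_dvd_right hcop ⟨2, by linarith⟩)
  have hb : p ^ 2 + (2 * q₁) ^ 2 ≤ p ^ 2 + q ^ 2 := by
    have : p ^ 2 + (2 * q₁) ^ 2 = p ^ 2 + q ^ 2 := by rw [hq1]; ring
    exact le_of_eq this
  have he1 : p ^ 2 + (2 * q₁) ^ 2 = d₁ ^ 2 + d₂ ^ 2 := by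
    rw [← hd₁, ← hd₂]
    linear_combination (-1 : ℤ) * hPQsum - (q + 2 * q₁) * hq1
  have he2 : p * (2 * q₁) = 2 * (d₁ * d₂) := by rw [hdd]; ring
  rcases oracle p (2 * q₁) d₁ d₂ hb he1 he2 hcop2 with h0 | h0
  · rw [h0] at hd₁; simp at hd₁; linarith
  · rw [h0] at hd₂; simp at hd₂; linarith

private lemma Qred (p q s : ℤ) (hcop : IsCoprime p q) (hp : p ≠ 0) (hq : q ≠ 0)
    (h : p ^ 4 + p ^ 2 * q ^ 2 + q ^ 4 = s ^ 2)
    (oracle : ∀ X Y M N : ℤ, X ^ 2 + Y ^ 2 ≤ p ^ 2 + q ^ 2 → X ^ 2 + Y ^ 2 = M ^ 2 + N ^ 2 →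
      X * Y = 2 * (M * N) → IsCoprime X Y → M = 0 ∨ N = 0) : False := by
  have habs4 : ∀ a : ℤ, |a| ^ 4 = a ^ 4 := fun a => by
    rw [show (4 : ℕ) = 2 * 2 from rfl, pow_mul, pow_mul, sq_abs]
  have h' : |p| ^ 4 + |p| ^ 2 * |q| ^ 2 + |q| ^ 4 = |s| ^ 2 := by
    rw [habs4, habs4, sq_abs, sq_abs, sq_abs]; exact h
  have hcop' : IsCoprime |p| |q| := isCoprime_abs hcop
  have hp' : 0 < |p| := abs_pos.mpr hp
  have hq' : 0 < |q| := abs_pos.mpr hq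
  have hs' : 0 < |s| := by
    rcases eq_or_ne s 0 with rfl | hs
    · exfalso
      simp only [ne_eq, zero_pow, OfNat.ofNat_ne_zero, not_false_eq_true] at h
      nlinarith [pow_pos hp' 4, pow_pos hq' 4, habs4 p, habs4 q, sq_nonneg (p * q)]
    · exact abs_pos.mpr hs
  have oracle' : ∀ X Y M N : ℤ, X ^ 2 + Y ^ 2 ≤ |p| ^ 2 + |q| ^ 2 →
      X ^ 2 + Y ^ 2 = M ^ 2 + N ^ 2 → X * Y = 2 * (M * N) → IsCoprime X Y → M = 0 ∨ N = 0 := by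
    intro X Y M N hb e1 e2 c
    exact oracle X Y M N (by rwa [sq_abs, sq_abs] at hb) e1 e2 c
  rcases Int.even_or_odd |p| with hpe | hpo
  · rcases Int.even_or_odd |q| with hqe | hqo
    · -- both even: contradicts coprimality
      obtain ⟨a, ha⟩ := hpe
      obtain ⟨b, hb⟩ := hqe
      have h2 : IsUnit (2 : ℤ) :=
        hcop'.isUnit_of_dvd' ⟨a, by linarith⟩ ⟨b, by linarith⟩
      rw [Int.isUnit_iff] at h2
      omega
    · -- p even, q odd: swap
      exact QredCore |q| |p| |s| hq' hp' hs' hqo hpe hcop'.symm (by linarith)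
        (fun X Y M N hb e1 e2 c => oracle' X Y M N (by linarith) e1 e2 c)
  · rcases Int.even_or_odd |q| with hqe | hqo
    · exact QredCore |p| |q| |s| hp' hq' hs' hpo hqe hcop' h' oracle'
    · -- both odd: contradiction mod 8
      have hsodd : Odd |s| := by
        rcases Int.even_or_odd |s| with he | ho
        · exfalso
          obtain ⟨t, ht⟩ := he
          have h2 : Odd (|p| ^ 4 + |p| ^ 2 * |q| ^ 2 + |q| ^ 4) := by
            have o1 : Odd (|p| ^ 4) := hpo.pow
            have o2 : Odd (|p| ^ 2 * |q| ^ 2) := (hpo.pow).mul (hqo.pow)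
            have o3 : Odd (|q| ^ 4) := hqo.pow
            exact (o1.add_odd o2).add_odd o3
          rw [h'] at h2
          have h3 : Even (|s| ^ 2) := ⟨2 * t ^ 2, by rw [ht]; ring⟩
          exact (Int.not_odd_iff_even.mpr h3) h2
        · exact ho
      have c8 := congrArg (fun t : ℤ => (t : ZMod 8)) h'
      push_cast at c8
      have hP := odd_sq_zmod8 hpo
      have hQ := odd_sq_zmod8 hqo
      have hS := odd_sq_zmod8 hsodd
      have key : (3 : ZMod 8) = 1 := by
        calc (3 : ZMod 8)
            = (((|p| : ℤ) : ZMod 8) ^ 2) ^ 2 + ((|p| : ℤ) : ZMod 8) ^ 2 * (((|q| : ℤ) : ZMod 8) ^ 2)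
              + (((|q| : ℤ) : ZMod 8) ^ 2) ^ 2 := by rw [hP, hQ]; norm_num
          _ = ((|p| : ℤ) : ZMod 8) ^ 4 + ((|p| : ℤ) : ZMod 8) ^ 2 * ((|q| : ℤ) : ZMod 8) ^ 2
              + ((|q| : ℤ) : ZMod 8) ^ 4 := by ring
          _ = ((|s| : ℤ) : ZMod 8) ^ 2 := c8
          _ = 1 := hS
      exact absurd key (by decide)

private lemma odd_sq_zmod4 {a : ℤ} (h : Odd a) : ((a : ZMod 4)) ^ 2 = 1 := by
  obtain ⟨k, rfl⟩ := h
  have key : (2 * k + 1 : ℤ) ^ 2 = 4 * (k ^ 2 + k) + 1 := by ring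
  calc ((2 * k + 1 : ℤ) : ZMod 4) ^ 2 = (((2 * k + 1 : ℤ) ^ 2 : ℤ) : ZMod 4) := by push_cast; ring
    _ = ((4 * (k ^ 2 + k) + 1 : ℤ) : ZMod 4) := by rw [key]
    _ = 1 := by push_cast; rw [show ((4 : ZMod 4)) = 0 from by decide]; ring

private lemma even_sq_zmod4 {a : ℤ} (h : Even a) : ((a : ZMod 4)) ^ 2 = 0 := by
  obtain ⟨k, rfl⟩ := h
  have key : (k + k : ℤ) ^ 2 = 4 * k ^ 2 := by ring
  calc ((k + k : ℤ) : ZMod 4) ^ 2 = (((k + k : ℤ) ^ 2 : ℤ) : ZMod 4) := by push_cast; ring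
    _ = ((4 * k ^ 2 : ℤ) : ZMod 4) := by rw [key]
    _ = 0 := by push_cast; rw [show ((4 : ZMod 4)) = 0 from by decide]; ring

private lemma nat_fac {a m n : ℕ} (hmn : Nat.Coprime m n) (h : a ∣ m * n) :
    a = Nat.gcd a m * Nat.gcd a n := by
  apply Nat.dvd_antisymm
  · have h1 : Nat.gcd a (m * n) = a := Nat.gcd_eq_left h
    calc a = Nat.gcd a (m * n) := h1.symm
      _ ∣ Nat.gcd a m * Nat.gcd a n := by
          have := gcd_mul_dvd_mul_gcd a m n
          simpa [gcd_eq_nat_gcd] using this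
  · exact Nat.Coprime.mul_dvd_of_dvd_of_dvd
      (Nat.Coprime.coprime_dvd_right (Nat.gcd_dvd_right a n)
        (Nat.Coprime.coprime_dvd_left (Nat.gcd_dvd_right a m) hmn))
      (Nat.gcd_dvd_left a m) (Nat.gcd_dvd_left a n)

private lemma nat_split {X W M N : ℕ} (hXW : Nat.Coprime X W) (hMN : Nat.Coprime M N)
    (h : X * W = M * N) :
    ∃ A B C D : ℕ, X = A * B ∧ W = C * D ∧ M = A * C ∧ N = B * D := by
  refine ⟨Nat.gcd X M, Nat.gcd X N, Nat.gcd W M, Nat.gcd W N, ?_, ?_, ?_, ?_⟩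
  · exact nat_fac hMN ⟨W, h.symm⟩
  · exact nat_fac hMN ⟨X, by rw [← h]; ring⟩
  · have := nat_fac hXW (⟨N, h⟩ : M ∣ X * W)
    rw [Nat.gcd_comm X M, Nat.gcd_comm W M]; exact this
  · have := nat_fac hXW (⟨M, by rw [h]; ring⟩ : N ∣ X * W)
    rw [Nat.gcd_comm X N, Nat.gcd_comm W N]; exact this

-- integer version of the splitting lemma, for positive integers
private lemma int_split {x w m n : ℤ} (hx : 0 < x) (hw : 0 < w) (hm : 0 < m) (hn : 0 < n)
    (hxw : IsCoprime x w) (hmn : IsCoprime m n) (h : x * w = m * n) :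
    ∃ A B C D : ℤ, 0 < A ∧ 0 < B ∧ 0 < C ∧ 0 < D ∧
      x = A * B ∧ w = C * D ∧ m = A * C ∧ n = B * D := by
  have h1 : Nat.Coprime x.natAbs w.natAbs := Int.isCoprime_iff_gcd_eq_one.mp hxw
  have h2 : Nat.Coprime m.natAbs n.natAbs := Int.isCoprime_iff_gcd_eq_one.mp hmn
  have h3 : x.natAbs * w.natAbs = m.natAbs * n.natAbs := by
    rw [← Int.natAbs_mul, ← Int.natAbs_mul, h]
  obtain ⟨A, B, C, D, e1, e2, e3, e4⟩ := nat_split h1 h2 h3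
  have hxa : ((x.natAbs : ℤ)) = x := Int.natAbs_of_nonneg hx.le
  have hwa : ((w.natAbs : ℤ)) = w := Int.natAbs_of_nonneg hw.le
  have hma : ((m.natAbs : ℤ)) = m := Int.natAbs_of_nonneg hm.le
  have hna : ((n.natAbs : ℤ)) = n := Int.natAbs_of_nonneg hn.le
  have hAB : 0 < A * B := by rw [← e1]; exact Int.natAbs_pos.mpr hx.ne'
  have hCD : 0 < C * D := by rw [← e2]; exact Int.natAbs_pos.mpr hw.ne'
  have hA : 0 < A := Nat.pos_of_ne_zero (fun h0 => by simp [h0] at hAB)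
  have hB : 0 < B := Nat.pos_of_ne_zero (fun h0 => by simp [h0] at hAB)
  have hC : 0 < C := Nat.pos_of_ne_zero (fun h0 => by simp [h0] at hCD)
  have hD : 0 < D := Nat.pos_of_ne_zero (fun h0 => by simp [h0] at hCD)
  refine ⟨A, B, C, D, by exact_mod_cast hA, by exact_mod_cast hB, by exact_mod_cast hC,
    by exact_mod_cast hD, ?_, ?_, ?_, ?_⟩
  · rw [← hxa, e1]; push_cast; ring
  · rw [← hwa, e2]; push_cast; ring
  · rw [← hma, e3]; push_cast; ring
  · rw [← hna, e4]; push_cast; ring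

set_option maxHeartbeats 1000000 in
private lemma Saux (x y m n : ℤ) (hx : 0 < x) (hy : 0 < y) (hm : 0 < m) (hn : 0 < n)
    (hxodd : Odd x)
    (e1 : x ^ 2 + y ^ 2 = m ^ 2 + n ^ 2) (e2 : x * y = 2 * (m * n)) (cop : IsCoprime x y)
    (oracle : ∀ X Y M N : ℤ, X ^ 2 + Y ^ 2 < x ^ 2 + y ^ 2 → X ^ 2 + Y ^ 2 = M ^ 2 + N ^ 2 →
      X * Y = 2 * (M * N) → IsCoprime X Y → M = 0 ∨ N = 0) : False := by
  -- y is even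
  have hyeven : Even y := by
    rcases Int.even_or_odd y with he | ho
    · exact he
    · exfalso
      have hodd : Odd (x * y) := hxodd.mul ho
      rw [e2] at hodd
      exact (Int.not_odd_iff_even.mpr ⟨m * n, by ring⟩) hodd
  obtain ⟨w, hw⟩ := hyeven
  have hw0 : 0 < w := by linarith
  have e3 : x * w = m * n := by
    have h4 : 2 * (x * w) = 2 * (m * n) := by rw [hw] at e2; linear_combination e2
    linarith
  have cop_xw : IsCoprime x w := IsCoprime.of_isCoprime_of_dvd_right cop ⟨2, by rw [hw]; ring⟩
  have cop_mn : IsCoprime m n := by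
    apply coprime_of_no_common_prime
    intro l hl h1 h2
    have hxy : l ∣ x * y := by rw [e2]; exact ((h1.mul_right n).mul_left 2)
    have hsum : l ∣ x ^ 2 + y ^ 2 := by
      rw [e1]; exact dvd_add (dvd_pow h1 two_ne_zero) (dvd_pow h2 two_ne_zero)
    rcases hl.dvd_mul.mp hxy with h3 | h3
    · have hy2 : l ∣ y ^ 2 := by
        have := dvd_sub hsum (dvd_pow h3 two_ne_zero); simpa using this
      exact hl.not_unit (cop.isUnit_of_dvd' h3 (hl.dvd_of_dvd_pow hy2))
    · have hx2 : l ∣ x ^ 2 := by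
        have := dvd_sub hsum (dvd_pow h3 two_ne_zero); simpa using this
      exact hl.not_unit (cop.isUnit_of_dvd' (hl.dvd_of_dvd_pow hx2) h3)
  obtain ⟨A, B, C, D, hA, hB, hC, hD, hxAB, hwCD, hmAC, hnBD⟩ :=
    int_split hx hw0 hm hn cop_xw cop_mn e3
  -- parities of A, B
  have hxodd' : Odd (A * B) := by rw [← hxAB]; exact hxodd
  have hAodd : Odd A := by
    rcases Int.even_or_odd A with h' | h'
    · exact absurd hxodd' (Int.not_odd_iff_even.mpr (h'.mul_right B))
    · exact h'
  have hBodd : Odd B := by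
    rcases Int.even_or_odd B with h' | h'
    · exact absurd hxodd' (Int.not_odd_iff_even.mpr (h'.mul_left A))
    · exact h'
  -- coprimality of the pieces
  have hABcop : IsCoprime A B :=
    (cop_mn.of_isCoprime_of_dvd_left ⟨C, hmAC⟩).of_isCoprime_of_dvd_right ⟨D, hnBD⟩
  have hCDcop : IsCoprime C D :=
    (cop_mn.of_isCoprime_of_dvd_left ⟨A, by rw [hmAC]; ring⟩).of_isCoprime_of_dvd_right
      ⟨B, by rw [hnBD]; ring⟩
  have hACcop : IsCoprime A C :=
    (cop_xw.of_isCoprime_of_dvd_left ⟨B, hxAB⟩).of_isCoprime_of_dvd_right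
      ⟨D, hwCD⟩
  have hADcop : IsCoprime A D :=
    (cop_xw.of_isCoprime_of_dvd_left ⟨B, hxAB⟩).of_isCoprime_of_dvd_right
      ⟨C, by rw [hwCD]; ring⟩
  have hBCcop : IsCoprime B C :=
    (cop_xw.of_isCoprime_of_dvd_left ⟨A, by rw [hxAB]; ring⟩).of_isCoprime_of_dvd_right
      ⟨D, hwCD⟩
  have hBDcop : IsCoprime B D :=
    (cop_xw.of_isCoprime_of_dvd_left ⟨A, by rw [hxAB]; ring⟩).of_isCoprime_of_dvd_right
      ⟨C, by rw [hwCD]; ring⟩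
  -- the key equation
  have e1' : (A * B) ^ 2 + ((C * D) + (C * D)) ^ 2 = (A * C) ^ 2 + (B * D) ^ 2 := by
    rw [← hxAB, ← hwCD, ← hmAC, ← hnBD, ← hw]; exact e1
  have key : A ^ 2 * (B ^ 2 - C ^ 2) = D ^ 2 * (B ^ 2 - 4 * C ^ 2) := by
    linear_combination e1'
  have hdvd : (D : ℤ) ^ 2 ∣ (B ^ 2 - C ^ 2) := by
    have h1 : D ^ 2 ∣ A ^ 2 * (B ^ 2 - C ^ 2) := ⟨B ^ 2 - 4 * C ^ 2, key⟩
    exact (hADcop.symm.pow).dvd_of_dvd_mul_left h1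
  obtain ⟨k, hk⟩ := hdvd
  have hD2 : (D : ℤ) ^ 2 ≠ 0 := pow_ne_zero _ (ne_of_gt hD)
  have h2 : B ^ 2 - 4 * C ^ 2 = k * A ^ 2 := by
    have hcan : D ^ 2 * (k * A ^ 2) = D ^ 2 * (B ^ 2 - 4 * C ^ 2) := by
      linear_combination key - A ^ 2 * hk
    exact (mul_left_cancel₀ hD2 hcan).symm
  -- k divides 3
  obtain ⟨u', v', huv'⟩ := (hBCcop.symm.pow : IsCoprime (C ^ 2) (B ^ 2))
  have hk1 : k ∣ 3 * C ^ 2 := ⟨D ^ 2 - A ^ 2, by linear_combination hk - h2⟩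
  have hk2 : k ∣ 3 * B ^ 2 := ⟨4 * D ^ 2 - A ^ 2, by linear_combination 4 * hk - h2⟩
  have hk3 : k ∣ 3 := by
    have h3 : (3 : ℤ) = u' * (3 * C ^ 2) + v' * (3 * B ^ 2) := by linear_combination (-3 : ℤ) * huv'
    rw [h3]; exact dvd_add (hk1.mul_left u') (hk2.mul_left v')
  have hkvals : k = 1 ∨ k = -1 ∨ k = 3 ∨ k = -3 := by
    have hna : k.natAbs ∣ 3 := by
      have := Int.natAbs_dvd_natAbs.mpr hk3; simpa using this
    have h3 := (Nat.prime_three).eq_one_or_self_of_dvd _ hna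
    omega
  -- parity constraints on C, D
  have hCD_parity : ¬(Odd C ∧ Odd D) := by
    rintro ⟨hoC, hoD⟩
    have hom : Odd m := by rw [hmAC]; exact hAodd.mul hoC
    have hon : Odd n := by rw [hnBD]; exact hBodd.mul hoD
    have heven : Even (m ^ 2 + n ^ 2) := (hom.pow).add_odd (hon.pow)
    have hodd : Odd (x ^ 2 + y ^ 2) := by
      have hx2 : Odd (x ^ 2) := hxodd.pow
      have hy2 : Even (y ^ 2) := ⟨2 * w ^ 2, by rw [hw]; ring⟩
      exact hx2.add_even hy2
    rw [e1] at hodd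
    exact (Int.not_odd_iff_even.mpr heven) hodd
  have hCDne : ¬(Even C ∧ Even D) := by
    rintro ⟨⟨c', hc'⟩, ⟨d', hd'⟩⟩
    have hu2 : IsUnit (2 : ℤ) := hCDcop.isUnit_of_dvd' ⟨c', by linarith⟩ ⟨d', by linarith⟩
    rw [Int.isUnit_iff] at hu2; omega
  rcases hkvals with rfl | rfl | rfl | rfl
  · -- k = 1
    rcases Int.even_or_odd C with hCe | hCo
    · -- descent via two Pythagorean triples
      have hDo : Odd D := by
        rcases Int.even_or_odd D with h' | h'
        · exact absurd ⟨hCe, h'⟩ hCDne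
        · exact h'
      have t1 : PythagoreanTriple D C B := by
        show D * D + C * C = B * B; linear_combination (-1 : ℤ) * hk
      have gcd1 : Int.gcd D C = 1 := Int.isCoprime_iff_gcd_eq_one.mp hCDcop.symm
      obtain ⟨a, b, hDab, hCab, hBab, hgab, -, -⟩ :=
        t1.coprime_classification' gcd1 (Int.odd_iff.mp hDo) hB
      have t2 : PythagoreanTriple A (2 * C) B := by
        show A * A + (2 * C) * (2 * C) = B * B; linear_combination (-1 : ℤ) * h2
      have gcd2 : Int.gcd A (2 * C) = 1 :=
        Int.isCoprime_iff_gcd_eq_one.mp ((odd_coprime_two hAodd).mul_right hACcop)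
      obtain ⟨c, d, hAcd, hC2cd, hBcd, hgcd, -, -⟩ :=
        t2.coprime_classification' gcd2 (Int.odd_iff.mp hAodd) hB
      have hCcd : C = c * d := by
        have : 2 * C = 2 * (c * d) := by linear_combination hC2cd
        linarith
      have hBle : B ≤ x := Int.le_of_dvd hx ⟨A, by rw [hxAB]; ring⟩
      have hxx : x ≤ x ^ 2 := le_self_pow₀ (by linarith) two_ne_zero
      have hy2 : (0 : ℤ) < y ^ 2 := by positivity
      have horacle := oracle c d a b
        (by have hcd : c ^ 2 + d ^ 2 = B := hBcd.symm; linarith)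
        (by have h5 : B = a ^ 2 + b ^ 2 := hBab; have h6 : B = c ^ 2 + d ^ 2 := hBcd; linarith)
        (by linear_combination hCab - hCcd)
        (Int.isCoprime_iff_gcd_eq_one.mpr hgcd)
      rcases horacle with h0 | h0
      · rw [h0] at hCab; simp at hCab; linarith
      · rw [h0] at hCab; simp at hCab; linarith
    · -- C odd: impossible mod 8
      have c8 := congrArg (fun t : ℤ => (t : ZMod 8)) h2
      push_cast at c8
      rw [odd_sq_zmod8 hBodd, odd_sq_zmod8 hCo, odd_sq_zmod8 hAodd] at c8
      exact absurd c8 (by decide)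
  · -- k = -1 : impossible
    rcases Int.even_or_odd C with hCe | hCo
    · have hDo : Odd D := by
        rcases Int.even_or_odd D with h' | h'
        · exact absurd ⟨hCe, h'⟩ hCDne
        · exact h'
      have c4 := congrArg (fun t : ℤ => (t : ZMod 4)) hk
      push_cast at c4
      rw [odd_sq_zmod4 hBodd, even_sq_zmod4 hCe, odd_sq_zmod4 hDo] at c4
      exact absurd c4 (by decide)
    · have c8 := congrArg (fun t : ℤ => (t : ZMod 8)) h2
      push_cast at c8
      rw [odd_sq_zmod8 hBodd, odd_sq_zmod8 hCo, odd_sq_zmod8 hAodd] at c8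
      exact absurd c8 (by decide)
  · -- k = 3 : impossible
    rcases Int.even_or_odd C with hCe | hCo
    · have hDo : Odd D := by
        rcases Int.even_or_odd D with h' | h'
        · exact absurd ⟨hCe, h'⟩ hCDne
        · exact h'
      have c4 := congrArg (fun t : ℤ => (t : ZMod 4)) hk
      push_cast at c4
      rw [odd_sq_zmod4 hBodd, even_sq_zmod4 hCe, odd_sq_zmod4 hDo] at c4
      exact absurd c4 (by decide)
    · have c8 := congrArg (fun t : ℤ => (t : ZMod 8)) h2
      push_cast at c8
      rw [odd_sq_zmod8 hBodd, odd_sq_zmod8 hCo, odd_sq_zmod8 hAodd] at c8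
      exact absurd c8 (by decide)
  · -- k = -3 : descent to the quartic
    have hA2 : A ^ 2 = C ^ 2 + D ^ 2 := by linarith
    have hAB2 : A ^ 2 - B ^ 2 = 4 * D ^ 2 := by linarith
    have hBA : B < A := by
      have hD2pos : (0 : ℤ) < D ^ 2 := pow_pos hD 2
      have hsq : B ^ 2 < A ^ 2 := by linarith
      by_contra h0
      push_neg at h0
      have := pow_le_pow_left₀ hA.le h0 2
      linarith
    obtain ⟨u, hu⟩ : Even (A + B) := hAodd.add_odd hBodd
    obtain ⟨v, hv⟩ : Even (A - B) := hAodd.sub_odd hBodd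
    have hAuv : A = u + v := by linarith
    have hBuv : B = u - v := by linarith
    have hu0 : 0 < u := by linarith
    have hv0 : 0 < v := by linarith
    have huv : u * v = D ^ 2 := by
      have h4 : 4 * (u * v) = 4 * D ^ 2 := by
        linear_combination hAB2 - (A + B) * hv - 2 * v * hu
      linarith
    have cop_uv : IsCoprime u v := by
      apply coprime_of_no_common_prime
      intro l hl h1' h2'
      have hA' : l ∣ A := by rw [hAuv]; exact dvd_add h1' h2'
      have hB' : l ∣ B := by rw [hBuv]; exact dvd_sub h1' h2'
      exact hl.not_unit (hABcop.isUnit_of_dvd' hA' hB')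
    obtain ⟨p, hp0, hup⟩ := sq_of_coprime_pos cop_uv huv hu0
    obtain ⟨qq, hqq0, hvq⟩ := sq_of_coprime_pos cop_uv.symm (by rw [mul_comm]; exact huv) hv0
    have hppos : 0 < p := by
      rcases hp0.lt_or_eq with h' | h'
      · exact h'
      · exfalso; rw [← h'] at hup; simp at hup; linarith
    have hqqpos : 0 < qq := by
      rcases hqq0.lt_or_eq with h' | h'
      · exact h'
      · exfalso; rw [← h'] at hvq; simp at hvq; linarith
    have hpq : p * qq = D := by
      apply eq_of_sq_eq_sq' (mul_nonneg hp0 hqq0) hD.le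
      calc (p * qq) ^ 2 = p ^ 2 * qq ^ 2 := by ring
        _ = u * v := by rw [← hup, ← hvq]
        _ = D ^ 2 := huv
    have hA' : A = p ^ 2 + qq ^ 2 := by rw [hAuv, hup, hvq]
    have cop_pq : IsCoprime p qq := by
      apply coprime_of_no_common_prime
      intro l hl h1' h2'
      exact hl.not_unit (cop_uv.isUnit_of_dvd'
        (by rw [hup]; exact dvd_pow h1' two_ne_zero)
        (by rw [hvq]; exact dvd_pow h2' two_ne_zero))
    have hCeq : p ^ 4 + p ^ 2 * qq ^ 2 + qq ^ 4 = C ^ 2 := by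
      rw [hA', ← hpq] at hA2
      linear_combination hA2
    refine Qred p qq C cop_pq (ne_of_gt hppos) (ne_of_gt hqqpos) hCeq ?_
    intro X Y M N hb he1 he2 hc
    apply oracle X Y M N ?_ he1 he2 hc
    have hAx : A ≤ x := Int.le_of_dvd hx ⟨B, hxAB⟩
    have hxx : x ≤ x ^ 2 := le_self_pow₀ (by linarith) two_ne_zero
    have hy2 : (0 : ℤ) < y ^ 2 := by positivity
    have hAb : p ^ 2 + qq ^ 2 = A := hA'.symm
    linarith

private lemma Smain : ∀ N : ℕ, ∀ x y m n : ℤ, x ^ 2 + y ^ 2 ≤ (N : ℤ) →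
    x ^ 2 + y ^ 2 = m ^ 2 + n ^ 2 → x * y = 2 * (m * n) → IsCoprime x y →
    m = 0 ∨ n = 0 := by
  intro N
  induction N using Nat.strong_induction_on with
  | _ N IH =>
    intro x y m n hle e1 e2 cop
    by_contra hcon
    push_neg at hcon
    obtain ⟨hm, hn⟩ := hcon
    have hm' : 0 < |m| := abs_pos.mpr hm
    have hn' : 0 < |n| := abs_pos.mpr hn
    have hxy0 : x * y ≠ 0 := by
      rw [e2]
      exact mul_ne_zero two_ne_zero (mul_ne_zero hm hn)
    have hx0 : x ≠ 0 := fun h0 => hxy0 (by rw [h0]; ring)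
    have hy0 : y ≠ 0 := fun h0 => hxy0 (by rw [h0]; ring)
    have e1' : |x| ^ 2 + |y| ^ 2 = |m| ^ 2 + |n| ^ 2 := by
      rw [sq_abs, sq_abs, sq_abs, sq_abs]; exact e1
    have e2' : |x| * |y| = 2 * (|m| * |n|) := by
      calc |x| * |y| = |x * y| := (abs_mul x y).symm
        _ = |2 * (m * n)| := by rw [e2]
        _ = 2 * (|m| * |n|) := by rw [abs_mul, abs_mul]; simp
    have cop' : IsCoprime |x| |y| := isCoprime_abs cop
    have hle' : |x| ^ 2 + |y| ^ 2 ≤ (N : ℤ) := by rwa [sq_abs, sq_abs]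
    have oracle : ∀ X Y M N' : ℤ, X ^ 2 + Y ^ 2 < |x| ^ 2 + |y| ^ 2 →
        X ^ 2 + Y ^ 2 = M ^ 2 + N' ^ 2 → X * Y = 2 * (M * N') → IsCoprime X Y →
        M = 0 ∨ N' = 0 := by
      intro X Y M N' hlt he1 he2 hc
      have hnn : (0 : ℤ) ≤ X ^ 2 + Y ^ 2 := by positivity
      have h1 : (X ^ 2 + Y ^ 2).toNat < N := by
        have h2 : X ^ 2 + Y ^ 2 < (N : ℤ) := lt_of_lt_of_le hlt hle'
        omega
      exact IH _ h1 X Y M N' (Int.self_le_toNat _) he1 he2 hc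
    have hx' : 0 < |x| := abs_pos.mpr hx0
    have hy' : 0 < |y| := abs_pos.mpr hy0
    rcases Int.even_or_odd |x| with hex | hox
    · have hoy : Odd |y| := by
        rcases Int.even_or_odd |y| with hey | h'
        · exfalso
          obtain ⟨a, ha⟩ := hex; obtain ⟨b, hb⟩ := hey
          have hu : IsUnit (2 : ℤ) := cop'.isUnit_of_dvd' ⟨a, by linarith⟩ ⟨b, by linarith⟩
          rw [Int.isUnit_iff] at hu; omega
        · exact h'
      exact Saux |y| |x| |m| |n| hy' hx' hm' hn' hoy (by linarith)
        (by rw [mul_comm]; exact e2') cop'.symm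
        (fun X Y M N' hlt he1 he2 hc => oracle X Y M N' (by linarith) he1 he2 hc)
    · exact Saux |x| |y| |m| |n| hx' hy' hm' hn' hox e1' e2' cop' oracle

private lemma Qfinal (r t s : ℤ) (hcop : IsCoprime r t)
    (h : r ^ 4 + r ^ 2 * t ^ 2 + t ^ 4 = s ^ 2) : r = 0 ∨ t = 0 := by
  by_contra hc
  push_neg at hc
  refine Qred r t s hcop hc.1 hc.2 h ?_
  intro X Y M N hb he1 he2 hcXY
  exact Smain (X ^ 2 + Y ^ 2).toNat X Y M N (Int.self_le_toNat _) he1 he2 hcXY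

/-- the only rational point on the elliptic curve
`y² = x³ + x² + x` is `(0, 0)`. -/
theorem rational_points_x3_x2_x (x y : ℚ) (h : y ^ 2 = x ^ 3 + x ^ 2 + x) :
    x = 0 ∧ y = 0 := by
  have hd0 : (0 : ℤ) < (x.den : ℤ) := by exact_mod_cast x.pos
  have hdenQ : ((x.den : ℚ)) ≠ 0 := Nat.cast_ne_zero.mpr x.den_nz
  have h2 : (x.num : ℚ) = x * (x.den : ℚ) := (div_eq_iff hdenQ).mp (Rat.num_div_den x)
  set z : ℚ := y * (x.den : ℚ) ^ 2 with hzdef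
  have hzsq : z ^ 2 =
      ((x.num * (x.den : ℤ) * (x.num ^ 2 + x.num * (x.den : ℤ) + (x.den : ℤ) ^ 2) : ℤ) : ℚ) := by
    calc z ^ 2 = y ^ 2 * ((x.den : ℚ)) ^ 4 := by rw [hzdef]; ring
      _ = (x ^ 3 + x ^ 2 + x) * ((x.den : ℚ)) ^ 4 := by rw [h]
      _ = (x * (x.den : ℚ)) ^ 3 * (x.den : ℚ) + (x * (x.den : ℚ)) ^ 2 * (x.den : ℚ) ^ 2
          + (x * (x.den : ℚ)) * (x.den : ℚ) ^ 3 := by ring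
      _ = (x.num : ℚ) ^ 3 * (x.den : ℚ) + (x.num : ℚ) ^ 2 * (x.den : ℚ) ^ 2
          + (x.num : ℚ) * (x.den : ℚ) ^ 3 := by rw [← h2]
      _ = _ := by push_cast; ring
  have hzden : z.den = 1 := by
    have hd : (z ^ 2).den = 1 := by rw [hzsq]; exact Rat.den_intCast _
    have hsq : z.den ^ 2 = 1 := by rw [← Rat.den_pow]; exact hd
    have hdvd : z.den ∣ 1 := by rw [← hsq]; exact dvd_pow_self z.den two_ne_zero
    exact Nat.dvd_one.mp hdvd
  have hz : ((z.num : ℚ)) = z := (Rat.den_eq_one_iff z).mp hzden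
  have he2 : z.num ^ 2 =
      x.num * (x.den : ℤ) * (x.num ^ 2 + x.num * (x.den : ℤ) + (x.den : ℤ) ^ 2) := by
    have hq : ((z.num : ℚ)) ^ 2 =
        ((x.num * (x.den : ℤ) * (x.num ^ 2 + x.num * (x.den : ℤ) + (x.den : ℤ) ^ 2) : ℤ) : ℚ) := by
      rw [hz]; exact hzsq
    exact_mod_cast hq
  have hcop : IsCoprime x.num ((x.den : ℤ)) := by
    rw [Int.isCoprime_iff_gcd_eq_one]
    simpa [Int.gcd, Int.natAbs_natCast] using x.reduced
  by_cases hn0 : x.num = 0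
  · have hx0 : x = 0 := Rat.num_eq_zero.mp hn0
    refine ⟨hx0, ?_⟩
    rw [hx0] at h
    simpa using pow_eq_zero_iff two_ne_zero |>.mp (by simpa using h)
  · exfalso
    have hd3pos : (0 : ℤ) < x.num ^ 2 + x.num * (x.den : ℤ) + (x.den : ℤ) ^ 2 := by
      nlinarith [sq_nonneg (2 * x.num + (x.den : ℤ)), mul_pos hd0 hd0]
    have hc3 : IsCoprime (x.num ^ 2 + x.num * (x.den : ℤ) + (x.den : ℤ) ^ 2) ((x.den : ℤ)) := by
      have hbase : IsCoprime (x.num ^ 2) ((x.den : ℤ)) := hcop.pow_left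
      have heq : x.num ^ 2 + x.num * (x.den : ℤ) + (x.den : ℤ) ^ 2
          = x.num ^ 2 + (x.den : ℤ) * (x.num + (x.den : ℤ)) := by ring
      rw [heq]
      exact hbase.add_mul_left_left (x.num + (x.den : ℤ))
    have hcop_b : IsCoprime
        (x.num * (x.num ^ 2 + x.num * (x.den : ℤ) + (x.den : ℤ) ^ 2)) ((x.den : ℤ)) :=
      IsCoprime.mul_left hcop hc3
    have hKfac : (x.num * (x.num ^ 2 + x.num * (x.den : ℤ) + (x.den : ℤ) ^ 2)) * (x.den : ℤ)
        = z.num ^ 2 := by rw [he2]; ring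
    obtain ⟨f, hf0, hbf⟩ := sq_of_coprime_pos hcop_b.symm
      (by rw [mul_comm]; exact hKfac) hd0
    have hnpos : 0 < x.num := by
      rcases lt_trichotomy x.num 0 with h0 | h0 | h0
      · exfalso
        have h1 : x.num * (x.num ^ 2 + x.num * (x.den : ℤ) + (x.den : ℤ) ^ 2) * (x.den : ℤ) < 0 :=
          mul_neg_of_neg_of_pos (mul_neg_of_neg_of_pos h0 hd3pos) hd0
        nlinarith [sq_nonneg z.num, hKfac]
      · exact absurd h0 hn0
      · exact h0
    have hnd3pos : 0 < x.num * (x.num ^ 2 + x.num * (x.den : ℤ) + (x.den : ℤ) ^ 2) :=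
      mul_pos hnpos hd3pos
    obtain ⟨g, hg0, hndg⟩ := sq_of_coprime_pos hcop_b hKfac hnd3pos
    have hcop_nd3 : IsCoprime x.num (x.num ^ 2 + x.num * (x.den : ℤ) + (x.den : ℤ) ^ 2) := by
      have hbase : IsCoprime x.num ((x.den : ℤ) ^ 2) := hcop.pow_right
      have heq : x.num ^ 2 + x.num * (x.den : ℤ) + (x.den : ℤ) ^ 2
          = (x.den : ℤ) ^ 2 + x.num * (x.num + (x.den : ℤ)) := by ring
      rw [heq]
      exact hbase.add_mul_left_right (x.num + (x.den : ℤ))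
    obtain ⟨r, hr0, hnr⟩ := sq_of_coprime_pos hcop_nd3 hndg hnpos
    obtain ⟨s, hs0, hd3s⟩ := sq_of_coprime_pos hcop_nd3.symm
      (by rw [mul_comm]; exact hndg) hd3pos
    have hquart : r ^ 4 + r ^ 2 * f ^ 2 + f ^ 4 = s ^ 2 := by
      rw [← hd3s, hnr, hbf]; ring
    have hcop_rf : IsCoprime r f := by
      apply coprime_of_no_common_prime
      intro l hl ha hb
      exact hl.not_unit (hcop.isUnit_of_dvd'
        (by rw [hnr]; exact dvd_pow ha two_ne_zero)
        (by rw [hbf]; exact dvd_pow hb two_ne_zero))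
    have hf_ne : f ≠ 0 := by
      intro h0
      have hdz : (x.den : ℤ) = 0 := by rw [hbf, h0]; ring
      linarith
    rcases Qfinal r f s hcop_rf hquart with h0 | h0
    · exact hn0 (by rw [hnr, h0]; ring)
    · exact hf_ne h0
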